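/- Suppose a lift f of F ∈ Homeo₀(𝕋²) has a Brouwer (0,1)-line ℓ such that for all n > 0, f^n(ℓ) is not strictly to the left of T₁^n(ℓ). Then max pr₁(rot(f)) ≥ 1, where pr₁ is projection to the first coordinate. -/

import Mathlib

open Filter Topology

/-- A line in `ℝ²`: a proper topological embedding of `ℝ`. -/
def IsLine (ℓ : ℝ → ℝ × ℝ) : Prop := Function.Injective ℓ ∧ IsProperMap ℓ

/-- A `(p,q)`-line: a line invariant under translation by `(p,q)` (after a time shift
`τ > 0`) whose projection to the torus is a simple closed curve. -/
def IsPQLine (p q : ℤ) (ℓ : ℝ → ℝ × ℝ) : Prop :=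
  IsLine ℓ ∧ ∃ τ > (0 : ℝ),
    (∀ t, ℓ (t + τ) = ℓ t + ((p : ℝ), (q : ℝ))) ∧
    ∀ s t : ℝ, ∀ m₁ m₂ : ℤ, ℓ t = ℓ s + ((m₁ : ℝ), (m₂ : ℝ)) → ∃ k : ℤ, t = s + k * τ

/-- `L` is the left side of the `(p,q)`-line `ℓ`: the connected component of the
complement of `ℓ` reached by going far in the direction `(−q, p)`. -/
def IsLeftSide (p q : ℤ) (ℓ : ℝ → ℝ × ℝ) (L : Set (ℝ × ℝ)) : Prop :=
  (∃ z ∉ Set.range ℓ, L = connectedComponentIn (Set.range ℓ)ᶜ z) ∧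
  ∀ᶠ t : ℝ in atTop, ℓ 0 + t • ((-q : ℝ), (p : ℝ)) ∈ L

/-- `R` is the right side of the `(p,q)`-line `ℓ`. -/
def IsRightSide (p q : ℤ) (ℓ : ℝ → ℝ × ℝ) (R : Set (ℝ × ℝ)) : Prop :=
  (∃ z ∉ Set.range ℓ, R = connectedComponentIn (Set.range ℓ)ᶜ z) ∧
  ∀ᶠ t : ℝ in atTop, ℓ 0 + t • ((q : ℝ), (-p : ℝ)) ∈ R

/-- `ℓ₁ < ℓ₂`: `ℓ₁` lies in the left component of the complement of `ℓ₂` and `ℓ₂` in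
the right component of the complement of `ℓ₁`. -/
def lineLT (p q : ℤ) (ℓ₁ ℓ₂ : ℝ → ℝ × ℝ) : Prop :=
  (∃ L, IsLeftSide p q ℓ₂ L ∧ Set.range ℓ₁ ⊆ L) ∧
  (∃ R, IsRightSide p q ℓ₁ R ∧ Set.range ℓ₂ ⊆ R)

/-- `ℓ₁ ≤ ℓ₂`: `ℓ₁` is contained in the closed left side of `ℓ₂`. -/
def lineLE (p q : ℤ) (ℓ₁ ℓ₂ : ℝ → ℝ × ℝ) : Prop :=
  ∃ L, IsLeftSide p q ℓ₂ L ∧ Set.range ℓ₁ ⊆ L ∪ Set.range ℓ₂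

/-- A homeomorphism of the plane is orientation preserving iff it is isotopic to the
identity through homeomorphisms. -/
def OrientationPreserving (f : ℝ × ℝ → ℝ × ℝ) : Prop :=
  ∃ H : ℝ → ℝ × ℝ → ℝ × ℝ,
    Continuous (fun z : ℝ × (ℝ × ℝ) => H z.1 z.2) ∧
    (∀ s, ∃ g : (ℝ × ℝ) ≃ₜ (ℝ × ℝ), ⇑g = H s) ∧ H 0 = id ∧ H 1 = f

def T1 (p : ℝ × ℝ) : ℝ × ℝ := (p.1 + 1, p.2)

def T2 (p : ℝ × ℝ) : ℝ × ℝ := (p.1, p.2 + 1)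

/-- The Misiurewicz–Ziemian rotation set. -/
def rotSet (f : ℝ × ℝ → ℝ × ℝ) : Set (ℝ × ℝ) :=
  {v | ∃ n : ℕ → ℕ, ∃ x : ℕ → ℝ × ℝ,
    Tendsto n atTop atTop ∧
    Tendsto (fun i => ((n i : ℝ))⁻¹ • (f^[n i] (x i) - x i)) atTop (𝓝 v)}

/-- A continuous periodic real function is bounded. -/
theorem aux_periodic_bounded {g : ℝ → ℝ} (hg : Continuous g) {τ : ℝ} (hτ : 0 < τ)
    (hper : Function.Periodic g τ) : ∃ M : ℝ, ∀ t, |g t| ≤ M := by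
  obtain ⟨C, hC⟩ := (isCompact_Icc (a := (0 : ℝ)) (b := τ)).exists_bound_of_continuousOn
    hg.continuousOn
  refine ⟨C, fun t => ?_⟩
  obtain ⟨y, hy, hyt⟩ := hper.exists_mem_Ico₀ hτ t
  rw [hyt, ← Real.norm_eq_abs]
  exact hC y (Set.mem_Icc_of_Ico hy)

/-- A continuous periodic real function attains its maximum. -/
theorem aux_periodic_exists_max {g : ℝ → ℝ} (hg : Continuous g) {τ : ℝ} (hτ : 0 < τ)
    (hper : Function.Periodic g τ) : ∃ t₀ : ℝ, ∀ t, g t ≤ g t₀ := by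
  obtain ⟨t₀, _, hmax⟩ := (isCompact_Icc (a := (0 : ℝ)) (b := τ)).exists_isMaxOn
    ⟨0, Set.left_mem_Icc.2 hτ.le⟩ hg.continuousOn
  refine ⟨t₀, fun t => ?_⟩
  obtain ⟨y, hy, hyt⟩ := hper.exists_mem_Ico₀ hτ t
  rw [hyt]
  exact isMaxOn_iff.mp hmax y (Set.mem_Icc_of_Ico hy)

/-- The displacement of a lift of a torus map is bounded. -/
theorem aux_displacement_bound (f : ℝ × ℝ → ℝ × ℝ) (hf : Continuous f)
    (hf1 : ∀ z, f (T1 z) = T1 (f z)) (hf2 : ∀ z, f (T2 z) = T2 (f z)) :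
    ∃ C : ℝ, ∀ z, ‖f z - z‖ ≤ C := by
  set g : ℝ × ℝ → ℝ × ℝ := fun z => f z - z with hg
  have hgc : Continuous g := hf.sub continuous_id
  have h1 : ∀ z : ℝ × ℝ, g (z + (1, 0)) = g z := by
    intro z
    have hz : z + ((1 : ℝ), (0 : ℝ)) = T1 z := by
      simp [T1, Prod.ext_iff]
    rw [hz]
    show f (T1 z) - T1 z = f z - z
    rw [hf1]
    simp only [T1, Prod.mk_sub_mk, Prod.ext_iff, Prod.fst_sub, Prod.snd_sub]
    exact ⟨by ring, trivial⟩
  have h2 : ∀ z : ℝ × ℝ, g (z + (0, 1)) = g z := by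
    intro z
    have hz : z + ((0 : ℝ), (1 : ℝ)) = T2 z := by
      simp [T2, Prod.ext_iff]
    rw [hz]
    show f (T2 z) - T2 z = f z - z
    rw [hf2]
    simp only [T2, Prod.mk_sub_mk, Prod.ext_iff, Prod.fst_sub, Prod.snd_sub]
    exact ⟨trivial, by ring⟩
  obtain ⟨C, hC⟩ := ((isCompact_Icc (a := (0 : ℝ)) (b := 1)).prod
    (isCompact_Icc (a := (0 : ℝ)) (b := 1))).exists_bound_of_continuousOn hgc.continuousOn
  refine ⟨C, fun z => ?_⟩
  have e1 : g (Int.fract z.1, z.2) = g z := by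
    have hp : Function.Periodic (fun t => g (t, z.2)) 1 := by
      intro t
      show g ((t + 1 : ℝ), z.2) = g ((t : ℝ), z.2)
      have heq : ((t + 1 : ℝ), z.2) = ((t : ℝ), z.2) + (1, 0) := by simp [Prod.ext_iff]
      rw [heq, h1]
    have h := hp.sub_zsmul_eq (x := z.1) ⌊z.1⌋
    have hz1 : z.1 - (⌊z.1⌋ : ℤ) • (1 : ℝ) = Int.fract z.1 := by
      rw [zsmul_eq_mul, mul_one, Int.fract]
    rw [hz1] at h
    exact h
  have e2 : g (Int.fract z.1, Int.fract z.2) = g (Int.fract z.1, z.2) := by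
    have hp : Function.Periodic (fun s => g (Int.fract z.1, s)) 1 := by
      intro s
      show g (Int.fract z.1, s + 1) = g (Int.fract z.1, s)
      have heq : ((Int.fract z.1 : ℝ), s + 1) = ((Int.fract z.1 : ℝ), s) + (0, 1) := by
        simp [Prod.ext_iff]
      rw [heq, h2]
    have h := hp.sub_zsmul_eq (x := z.2) ⌊z.2⌋
    have hz2 : z.2 - (⌊z.2⌋ : ℤ) • (1 : ℝ) = Int.fract z.2 := by
      rw [zsmul_eq_mul, mul_one, Int.fract]
    rw [hz2] at h
    exact h
  have hmem : ((Int.fract z.1, Int.fract z.2) : ℝ × ℝ) ∈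
      Set.Icc (0 : ℝ) 1 ×ˢ Set.Icc (0 : ℝ) 1 := by
    constructor <;> exact ⟨Int.fract_nonneg _, (Int.fract_lt_one _).le⟩
  calc ‖f z - z‖ = ‖g (Int.fract z.1, Int.fract z.2)‖ := by rw [e2, e1]
    _ ≤ C := hC _ hmem

/-- Iterated displacement bound. -/
theorem aux_iterate_bound {f : ℝ × ℝ → ℝ × ℝ} {C : ℝ} (h : ∀ z, ‖f z - z‖ ≤ C) :
    ∀ (n : ℕ) (z), ‖f^[n] z - z‖ ≤ n * C := by
  intro n
  induction n with
  | zero => simp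
  | succ n ih =>
    intro z
    have hsplit : f^[n + 1] z - z = (f (f^[n] z) - f^[n] z) + (f^[n] z - z) := by
      rw [Function.iterate_succ_apply']
      abel
    calc ‖f^[n + 1] z - z‖ ≤ ‖f (f^[n] z) - f^[n] z‖ + ‖f^[n] z - z‖ := by
          rw [hsplit]; exact norm_add_le _ _
      _ ≤ C + n * C := add_le_add (h _) (ih z)
      _ = (n + 1 : ℕ) * C := by push_cast; ring

set_option maxHeartbeats 1000000 in
/-- If a lift `f` has a Brouwer `(0,1)`-line `ℓ` such that for all `n > 0` the line
`f^n(ℓ)` is not strictly to the left of `T₁^n(ℓ)`, then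
`max pr₁(rot(f)) ≥ 1`. -/
theorem rot_first_coord_ge_one (f : (ℝ × ℝ) ≃ₜ (ℝ × ℝ))
    (hf1 : ∀ z, f (T1 z) = T1 (f z)) (hf2 : ∀ z, f (T2 z) = T2 (f z))
    (ℓ : ℝ → ℝ × ℝ) (hℓ : IsPQLine 0 1 ℓ) (hB : lineLT 0 1 ℓ (⇑f ∘ ℓ))
    (hno : ∀ n : ℕ, 0 < n →
      ¬ lineLT 0 1 ((⇑f)^[n] ∘ ℓ) (fun t => ℓ t + ((n : ℝ), 0))) :
    ∃ v ∈ rotSet ⇑f, 1 ≤ v.1 := by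
  obtain ⟨⟨hinj, hproper⟩, τ, hτ, hperℓ, _⟩ := hℓ
  have hℓc : Continuous ℓ := hproper.continuous
  -- bound on the first coordinate of ℓ
  have hper1 : Function.Periodic (fun t => (ℓ t).1) τ := by
    intro t
    show (ℓ (t + τ)).1 = (ℓ t).1
    rw [hperℓ]; simp
  obtain ⟨M, hM⟩ := aux_periodic_bounded (continuous_fst.comp hℓc) hτ hper1
  have hM' : ∀ t, |(ℓ t).1| ≤ M := hM
  have hM0 : 0 ≤ M := le_trans (abs_nonneg _) (hM' 0)
  -- f commutes with T2, hence so do its iterates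
  have hcomm2 : ∀ (k : ℕ) (z), (⇑f)^[k] (T2 z) = T2 ((⇑f)^[k] z) := by
    intro k
    induction k with
    | zero => simp
    | succ k ih =>
      intro z
      rw [Function.iterate_succ_apply, hf2, ih, Function.iterate_succ_apply]
  -- key step: extract a point with large image first coordinate
  have key : ∀ m : ℕ, ∃ t : ℝ, ((m : ℝ) + 1) - M ≤ ((⇑f)^[m + 1] (ℓ t)).1 := by
    intro m
    by_contra hcon
    push_neg at hcon
    apply hno (m + 1) (Nat.succ_pos m)
    set n : ℕ := m + 1 with hn
    have hnc : (n : ℝ) = (m : ℝ) + 1 := by rw [hn]; push_cast; ring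
    set c : ℝ := (n : ℝ) - M with hc
    have hcon' : ∀ t, ((⇑f)^[n] (ℓ t)).1 < c := by
      intro t
      have := hcon t
      rw [hc]
      linarith [hnc]
    have hfl : Continuous fun t => (⇑f)^[n] (ℓ t) := (f.continuous.iterate n).comp hℓc
    have hper2 : Function.Periodic (fun t => ((⇑f)^[n] (ℓ t)).1) τ := by
      intro t
      show ((⇑f)^[n] (ℓ (t + τ))).1 = ((⇑f)^[n] (ℓ t)).1
      have hT2 : ℓ (t + τ) = T2 (ℓ t) := by
        rw [hperℓ]; simp [T2, Prod.ext_iff]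
      rw [hT2, hcomm2 n (ℓ t)]
      rfl
    obtain ⟨t₀, ht₀⟩ := aux_periodic_exists_max (continuous_fst.comp hfl) hτ hper2
    set c' : ℝ := ((⇑f)^[n] (ℓ t₀)).1 with hc'
    have hc'c : c' < c := hcon' t₀
    constructor
    · -- left side of ℓ + (n, 0)
      set ℓ₂ : ℝ → ℝ × ℝ := fun t => ℓ t + ((n : ℝ), 0) with hℓ₂
      set U : Set (ℝ × ℝ) := {x | x.1 < c} with hU
      have hUdisj : U ⊆ (Set.range ℓ₂)ᶜ := by
        rintro x hx ⟨t, rfl⟩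
        have h1 : (ℓ t).1 + (n : ℝ) < c := hx
        have h2 := (abs_le.1 (hM' t)).1
        rw [hc] at h1
        linarith
      have hUconn : IsPreconnected U :=
        (convex_halfSpace_lt ⟨fun _ _ => rfl, fun _ _ => rfl⟩ c).isPreconnected
      have hzU : ((c - 1, 0) : ℝ × ℝ) ∈ U := by
        show c - 1 < c; linarith
      refine ⟨connectedComponentIn (Set.range ℓ₂)ᶜ (c - 1, 0),
        ⟨⟨(c - 1, 0), hUdisj hzU, rfl⟩, ?_⟩, ?_⟩
      · filter_upwards [eventually_ge_atTop (2 * M + 1)] with t ht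
        apply hUconn.subset_connectedComponentIn hzU hUdisj
        show (ℓ₂ 0 + t • (-((1 : ℤ) : ℝ), ((0 : ℤ) : ℝ))).1 < c
        have h2 := (abs_le.1 (hM' 0)).2
        simp only [hℓ₂, Prod.fst_add, Prod.smul_fst, smul_eq_mul]
        rw [hc]
        push_cast
        linarith [hnc]
      · rintro _ ⟨t, rfl⟩
        exact hUconn.subset_connectedComponentIn hzU hUdisj (hcon' t)
    · -- right side of f^[n] ∘ ℓ
      set ℓ₁ : ℝ → ℝ × ℝ := (⇑f)^[n] ∘ ℓ with hℓ₁
      set V : Set (ℝ × ℝ) := {x | c' < x.1} with hV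
      have hVdisj : V ⊆ (Set.range ℓ₁)ᶜ := by
        rintro x hx ⟨t, rfl⟩
        exact absurd (ht₀ t) (not_le.2 hx)
      have hVconn : IsPreconnected V :=
        (convex_halfSpace_gt ⟨fun _ _ => rfl, fun _ _ => rfl⟩ c').isPreconnected
      have hzV : ((c' + 1, 0) : ℝ × ℝ) ∈ V := by
        show c' < c' + 1; linarith
      refine ⟨connectedComponentIn (Set.range ℓ₁)ᶜ (c' + 1, 0),
        ⟨⟨(c' + 1, 0), hVdisj hzV, rfl⟩, ?_⟩, ?_⟩
      · filter_upwards [eventually_ge_atTop (c' - (ℓ₁ 0).1 + 1)] with t ht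
        apply hVconn.subset_connectedComponentIn hzV hVdisj
        show c' < (ℓ₁ 0 + t • (((1 : ℤ) : ℝ), -((0 : ℤ) : ℝ))).1
        simp only [Prod.fst_add, Prod.smul_fst, smul_eq_mul]
        push_cast
        linarith
      · rintro _ ⟨t, rfl⟩
        apply hVconn.subset_connectedComponentIn hzV hVdisj
        show c' < ((fun t => ℓ t + ((n : ℝ), 0)) t).1
        have h2 := (abs_le.1 (hM' t)).1
        simp only [Prod.fst_add]
        linarith [hc'c]
  -- choose the points and extract a convergent subsequence of rotation vectors
  choose tt htt using key
  set x : ℕ → ℝ × ℝ := fun m => ℓ (tt m) with hx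
  obtain ⟨C, hC⟩ := aux_displacement_bound ⇑f f.continuous hf1 hf2
  set u : ℕ → ℝ × ℝ := fun m => (((m : ℝ) + 1))⁻¹ • ((⇑f)^[m + 1] (x m) - x m) with hu
  have humem : ∀ m, u m ∈ Metric.closedBall (0 : ℝ × ℝ) C := by
    intro m
    have hpos : (0 : ℝ) < (m : ℝ) + 1 := by positivity
    rw [Metric.mem_closedBall, dist_zero_right, hu]
    calc ‖(((m : ℝ) + 1))⁻¹ • ((⇑f)^[m + 1] (x m) - x m)‖
        = (((m : ℝ) + 1))⁻¹ * ‖(⇑f)^[m + 1] (x m) - x m‖ := by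
          rw [norm_smul, Real.norm_eq_abs, abs_of_pos (by positivity)]
      _ ≤ (((m : ℝ) + 1))⁻¹ * (((m + 1 : ℕ) : ℝ) * C) := by
          apply mul_le_mul_of_nonneg_left (aux_iterate_bound hC (m + 1) (x m))
          positivity
      _ = C := by
          push_cast
          field_simp
  obtain ⟨v, hvmem, φ, hφ, hconv⟩ :=
    (isCompact_closedBall (0 : ℝ × ℝ) C).tendsto_subseq humem
  have hφtop : Tendsto φ atTop atTop := hφ.tendsto_atTop
  refine ⟨v, ⟨fun i => φ i + 1, fun i => x (φ i), ?_, ?_⟩, ?_⟩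
  · exact tendsto_atTop_mono (fun i => le_trans hφ.le_apply (Nat.le_succ _)) tendsto_id
  · have : (fun i => (((φ i + 1 : ℕ) : ℝ))⁻¹ •
        ((⇑f)^[φ i + 1] (x (φ i)) - x (φ i))) = u ∘ φ := by
      funext i
      simp [hu, Function.comp]
    rw [this]
    exact hconv
  · -- the limit has first coordinate at least 1
    have h1 : Tendsto (fun i => (u (φ i)).1) atTop (𝓝 v.1) :=
      (continuous_fst.tendsto v).comp hconv
    have h2 : ∀ i, 1 - 2 * M / ((φ i : ℝ) + 1) ≤ (u (φ i)).1 := by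
      intro i
      set m := φ i
      have hpos : (0 : ℝ) < (m : ℝ) + 1 := by positivity
      have hb := htt m
      have hx1 : |(x m).1| ≤ M := hM' _
      have hlow : ((m : ℝ) + 1) - 2 * M ≤ ((⇑f)^[m + 1] (x m)).1 - (x m).1 := by
        have := (abs_le.1 hx1).2
        rw [hx]
        linarith
      have heq : (u m).1 = (((m : ℝ) + 1))⁻¹ * (((⇑f)^[m + 1] (x m)).1 - (x m).1) := by
        rw [hu]
        simp [Prod.smul_fst]
      rw [heq]
      have hrw : 1 - 2 * M / ((m : ℝ) + 1) =
          (((m : ℝ) + 1))⁻¹ * (((m : ℝ) + 1) - 2 * M) := by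
        field_simp
      rw [hrw]
      exact mul_le_mul_of_nonneg_left hlow (by positivity)
    have h3 : Tendsto (fun i => 1 - 2 * M / ((φ i : ℝ) + 1)) atTop (𝓝 1) := by
      have htop : Tendsto (fun i => ((φ i : ℝ) + 1)) atTop atTop :=
        tendsto_atTop_add_const_right _ 1 (tendsto_natCast_atTop_atTop.comp hφtop)
      have hdiv : Tendsto (fun i => 2 * M / ((φ i : ℝ) + 1)) atTop (𝓝 0) :=
        Tendsto.div_atTop tendsto_const_nhds htop
      simpa using tendsto_const_nhds.sub hdiv
    exact le_of_tendsto_of_tendsto' h3 h1 h2
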